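/- Let Σ and Λ be finite alphabets, n ≥ 1, 0 ≤ ε < 1/2, and N = 2^m for some m ≥ 1. Let P(X¹, X²₁, …, X²_N | U¹, U²₁, …, U²_N) be a family of conditional distributions with outputs X¹, X²_k ∈ Σⁿ and inputs U¹, U²_k ∈ Λⁿ, which is no-signaling between the N+1 blocks: for every subset of blocks, the marginal distribution of the outputs of those blocks depends only on the inputs of those blocks. Let ν be a probability distribution over (j, U¹, U²₁, …, U²_N) ∈ {1,…,N} × (Λⁿ)^{N+1} such that ν(j | U¹, U²₁,…,U²_N) ≤ (1/2 + ε)^{log₂ N} for all j and all inputs (as holds when j is specified by log₂ N bits of an ε-SV source). For fixed (j, U¹, U²) and prior outputs X²_{<j} = (X²₁,…,X²_{j−1}) of positive probability, define the conditional box P̃(X¹, X²_j | U¹, U²_j) := P(X¹, X²_j | X²_{<j}, U¹, U²), with marginals P̃(X¹ | U¹) and P̃(X²_j | U²_j). Then E_{(j, U¹, U²) ∼ ν} E_{X²_{<j} ∼ P(·|U¹,U²)} ‖ P̃(X¹, X²_j | U¹, U²_j) − P̃(X¹ | U¹) ⊗ P̃(X²_j | U²_j) ‖ ≤ sqrt(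 2 ln(2) · N^{log₂(1+2ε)} · n log₂|Σ| / N ). -/

import Mathlib

open Classical
set_option linter.unusedSectionVars false

noncomputable section

/-- `X` agrees with the record `Y` of prior outputs on all blocks of the second device
strictly before block `j` (block `k` of the second device is block `k.succ` of the
joint device, block `0` being the first device). -/
def priorAgree {O : Type} {n N : ℕ} (j : Fin N) (Y : Fin N → Fin n → O)
    (X : Fin (N + 1) → Fin n → O) : Prop :=
  ∀ k : Fin N, k < j → X k.succ = Y k

/-- Probability (under `P(·|U)`) of the prior outputs recorded in `Y`. -/
def priorProb {O I : Type} [Fintype O] [Fintype I] {n N : ℕ}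
    (P : (Fin (N + 1) → Fin n → I) → (Fin (N + 1) → Fin n → O) → ℝ)
    (j : Fin N) (U : Fin (N + 1) → Fin n → I) (Y : Fin N → Fin n → O) : ℝ :=
  ∑ X ∈ Finset.univ.filter (fun X => priorAgree j Y X), P U X

/-- The conditional box `P̃(X¹, X²_j | U¹, U²_j)` given the prior outputs `Y`. -/
def tildeJoint {O I : Type} [Fintype O] [Fintype I] {n N : ℕ}
    (P : (Fin (N + 1) → Fin n → I) → (Fin (N + 1) → Fin n → O) → ℝ)
    (j : Fin N) (U : Fin (N + 1) → Fin n → I) (Y : Fin N → Fin n → O)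
    (x1 x2 : Fin n → O) : ℝ :=
  (∑ X ∈ Finset.univ.filter
      (fun X => priorAgree j Y X ∧ X 0 = x1 ∧ X j.succ = x2), P U X)
    / priorProb P j U Y

/-- The marginal `P̃(X¹ | U¹)` of the conditional box. -/
def tildeFst {O I : Type} [Fintype O] [Fintype I] {n N : ℕ}
    (P : (Fin (N + 1) → Fin n → I) → (Fin (N + 1) → Fin n → O) → ℝ)
    (j : Fin N) (U : Fin (N + 1) → Fin n → I) (Y : Fin N → Fin n → O)
    (x1 : Fin n → O) : ℝ :=
  (∑ X ∈ Finset.univ.filter (fun X => priorAgree j Y X ∧ X 0 = x1), P U X)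
    / priorProb P j U Y

/-- The marginal `P̃(X²_j | U²_j)` of the conditional box. -/
def tildeSnd {O I : Type} [Fintype O] [Fintype I] {n N : ℕ}
    (P : (Fin (N + 1) → Fin n → I) → (Fin (N + 1) → Fin n → O) → ℝ)
    (j : Fin N) (U : Fin (N + 1) → Fin n → I) (Y : Fin N → Fin n → O)
    (x2 : Fin n → O) : ℝ :=
  (∑ X ∈ Finset.univ.filter (fun X => priorAgree j Y X ∧ X j.succ = x2), P U X)
    / priorProb P j U Y


namespace SV5

open Finset Real

variable {Ω α β γ : Type} [Fintype Ω] [Fintype α] [Fintype β] [Fintype γ]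

/-- pushforward of a weight function along a map -/
def pushf (p : Ω → ℝ) (f : Ω → α) (a : α) : ℝ :=
  ∑ ω ∈ Finset.univ.filter (fun ω => f ω = a), p ω

lemma pushf_nonneg {p : Ω → ℝ} (hp : ∀ ω, 0 ≤ p ω) (f : Ω → α) (a : α) :
    0 ≤ pushf p f a := Finset.sum_nonneg fun ω _ => hp ω

lemma sum_pushf (p : Ω → ℝ) (f : Ω → α) : ∑ a, pushf p f a = ∑ ω, p ω :=
  Finset.sum_fiberwise _ _ _

lemma le_pushf {p : Ω → ℝ} (hp : ∀ ω, 0 ≤ p ω) (f : Ω → α) (ω : Ω) :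
    p ω ≤ pushf p f (f ω) := by
  refine Finset.single_le_sum (fun ω _ => hp ω) ?_
  simp

lemma pushf_pair_snd (p : Ω → ℝ) (f : Ω → α) (g : Ω → β) (b : β) :
    ∑ a : α, pushf p (fun ω => (f ω, g ω)) (a, b) = pushf p g b := by
  unfold pushf
  simp only [Finset.sum_filter]
  rw [Finset.sum_comm]
  refine Finset.sum_congr rfl fun ω _ => ?_
  rcases eq_or_ne (g ω) b with h | h
  · simp [h, Prod.ext_iff]
  · simp [h, Prod.ext_iff]

lemma pushf_comp_inj {p : Ω → ℝ} {e : α → β} (he : Function.Injective e) (f : Ω → α) (a : α) :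
    pushf p (fun ω => e (f ω)) (e a) = pushf p f a := by
  unfold pushf
  apply Finset.sum_congr _ (fun _ _ => rfl)
  ext ω
  simp [he.eq_iff]

lemma pushf_comp_out {p : Ω → ℝ} (e : α → β) (f : Ω → α) {b : β} (hb : b ∉ Set.range e) :
    pushf p (fun ω => e (f ω)) b = 0 := by
  unfold pushf
  rw [Finset.filter_false_of_mem, Finset.sum_empty]
  intro ω _ h
  exact hb ⟨f ω, h⟩

/-- entropy of a weight vector -/
def ent (r : α → ℝ) : ℝ := ∑ a, Real.negMulLog (r a)

lemma ent_comp_inj (p : Ω → ℝ) {e : α → β} (he : Function.Injective e) (f : Ω → α) :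
    ent (pushf p (fun ω => e (f ω))) = ent (pushf p f) := by
  unfold ent
  refine (Fintype.sum_of_injective e he _ _ (fun b hb => ?_) (fun a => ?_)).symm
  · rw [pushf_comp_out e f hb, Real.negMulLog_zero]
  · rw [pushf_comp_inj he]

lemma ent_nonneg {r : α → ℝ} (h0 : ∀ a, 0 ≤ r a) (h1 : ∑ a, r a ≤ 1) : 0 ≤ ent r := by
  refine Finset.sum_nonneg fun a _ => Real.negMulLog_nonneg (h0 a) ?_
  calc r a ≤ ∑ a, r a := Finset.single_le_sum (fun a _ => h0 a) (Finset.mem_univ a)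
  _ ≤ 1 := h1

lemma one_sub_inv_le_log {x : ℝ} (hx : 0 < x) : 1 - x⁻¹ ≤ Real.log x := by
  have h := Real.log_le_sub_one_of_pos (inv_pos.2 hx)
  rw [Real.log_inv] at h
  linarith

lemma negMulLog_le {x : ℝ} {K : ℝ} (hx : 0 ≤ x) (hK : 0 < K) :
    Real.negMulLog x ≤ x * Real.log K + (K⁻¹ - x) := by
  rcases eq_or_lt_of_le hx with h | h
  · simp [← h, Real.negMulLog_zero]
    positivity
  · have h1 : 0 < x * K := by positivity
    have h2 := one_sub_inv_le_log h1
    have h3 : Real.log (x * K) = Real.log x + Real.log K := Real.log_mul (ne_of_gt h) (ne_of_gt hK)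
    rw [h3] at h2
    have h4 : x * (1 - (x * K)⁻¹) ≤ x * (Real.log x + Real.log K) :=
      mul_le_mul_of_nonneg_left h2 hx
    have h5 : x * (x * K)⁻¹ = K⁻¹ := by
      field_simp
    rw [mul_sub, h5] at h4
    unfold Real.negMulLog
    nlinarith
  
lemma ent_le_log_card {r : α → ℝ} (h0 : ∀ a, 0 ≤ r a) (h1 : ∑ a, r a = 1) :
    ent r ≤ Real.log (Fintype.card α) := by
  have hne : Nonempty α := by
    by_contra h
    simp only [not_nonempty_iff] at h
    rw [Finset.univ_eq_empty, Finset.sum_empty] at h1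
    norm_num at h1
  have hK : (0:ℝ) < Fintype.card α := by
    have := Fintype.card_pos (α := α)
    exact_mod_cast this
  calc ent r ≤ ∑ a, (r a * Real.log (Fintype.card α) + ((Fintype.card α : ℝ)⁻¹ - r a)) :=
      Finset.sum_le_sum fun a _ => negMulLog_le (h0 a) hK
    _ = Real.log (Fintype.card α) := by
      rw [Finset.sum_add_distrib, ← Finset.sum_mul, h1, one_mul, Finset.sum_sub_distrib, h1,
        Finset.sum_const, Finset.card_univ, nsmul_eq_mul, mul_inv_cancel₀ (ne_of_gt hK)]
      ring

open Finset Real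

lemma one_sub_inv_le_log' {x : ℝ} (hx : 0 < x) : 1 - x⁻¹ ≤ Real.log x := by
  have h := Real.log_le_sub_one_of_pos (inv_pos.2 hx)
  rw [Real.log_inv] at h
  linarith

/-- the KL summand -/
def klT (x y : ℝ) : ℝ := x * Real.log (x / y)

lemma klT_zero (y : ℝ) : klT 0 y = 0 := by simp [klT]

lemma sub_le_klT {x y : ℝ} (hx : 0 ≤ x) (hy : 0 ≤ y) (habs : y = 0 → x = 0) :
    x - y ≤ klT x y := by
  rcases eq_or_lt_of_le hx with h | hx'
  · rw [← h, klT_zero]; linarith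
  · have hy' : 0 < y := by
      rcases eq_or_lt_of_le hy with h' | h'
      · exact absurd (habs h'.symm) (ne_of_gt hx')
      · exact h'
    have ht : 0 < x / y := by positivity
    have h2 := one_sub_inv_le_log' ht
    have h3 : (x / y)⁻¹ = y / x := by field_simp
    rw [h3] at h2
    have h4 := mul_le_mul_of_nonneg_left h2 hx
    unfold klT
    have h5 : x * (y / x) = y := by field_simp
    rw [mul_sub, h5, mul_one] at h4
    exact h4

private def kfun : ℝ → ℝ := fun s => (s + 1) * Real.log s - 2 * (s - 1)

private lemma kfun_hasDeriv {s : ℝ} (hs : 0 < s) :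
    HasDerivAt kfun (1 * Real.log s + (s + 1) * s⁻¹ - 2) s := by
  have h1 : HasDerivAt (fun u : ℝ => (u + 1) * Real.log u)
      (1 * Real.log s + (s + 1) * s⁻¹) s :=
    ((hasDerivAt_id s).add_const 1).mul (Real.hasDerivAt_log hs.ne')
  have h2 : HasDerivAt (fun u : ℝ => 2 * (u - 1)) 2 s := by
    simpa using ((hasDerivAt_id s).sub_const 1).const_mul 2
  have h3 := h1.sub h2
  simp only [one_mul] at h3 ⊢
  exact h3

private lemma kfun_deriv_nonneg {s : ℝ} (hs : 0 < s) :
    0 ≤ 1 * Real.log s + (s + 1) * s⁻¹ - 2 := by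
  have h := one_sub_inv_le_log' hs
  have h2 : (s + 1) * s⁻¹ = 1 + s⁻¹ := by field_simp
  rw [h2]
  linarith

private lemma kfun_monotoneOn {a b : ℝ} (ha : 0 < a) : MonotoneOn kfun (Set.Icc a b) := by
  apply monotoneOn_of_deriv_nonneg (convex_Icc a b)
  · apply ContinuousOn.sub
    · apply ContinuousOn.mul (by fun_prop)
      apply Real.continuousOn_log.mono
      intro s hs
      exact ne_of_gt (lt_of_lt_of_le ha hs.1)
    · fun_prop
  · intro s hs
    rw [interior_Icc] at hs
    exact (kfun_hasDeriv (lt_trans ha hs.1)).differentiableAt.differentiableWithinAt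
  · intro s hs
    rw [interior_Icc] at hs
    have hs' : 0 < s := lt_trans ha hs.1
    rw [(kfun_hasDeriv hs').deriv]
    exact kfun_deriv_nonneg hs'

private lemma kfun_one : kfun 1 = 0 := by simp [kfun]

private lemma kfun_nonneg {t : ℝ} (ht : 1 ≤ t) : 0 ≤ kfun t := by
  have := kfun_monotoneOn (a := 1) (b := t) one_pos
    (Set.mem_Icc.2 ⟨le_refl 1, ht⟩) (Set.mem_Icc.2 ⟨ht, le_refl t⟩) ht
  rwa [kfun_one] at this

private lemma kfun_nonpos {t : ℝ} (ht0 : 0 < t) (ht : t ≤ 1) : kfun t ≤ 0 := by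
  have := kfun_monotoneOn (a := t) (b := 1) ht0
    (Set.mem_Icc.2 ⟨le_refl t, ht⟩) (Set.mem_Icc.2 ⟨ht, le_refl 1⟩) ht
  rwa [kfun_one] at this

private def hfun : ℝ → ℝ :=
  fun s => (2 * s + 4) * (s * Real.log s - s + 1) - 3 * (s - 1) ^ 2

private lemma hfun_hasDeriv {s : ℝ} (hs : 0 < s) :
    HasDerivAt hfun (4 * kfun s) s := by
  have h1 : HasDerivAt (fun u : ℝ => u * Real.log u) (Real.log s + 1) s :=
    Real.hasDerivAt_mul_log hs.ne'
  have h2 : HasDerivAt (fun u : ℝ => u * Real.log u - u + 1)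
      (Real.log s + 1 - 1) s := (h1.sub (hasDerivAt_id s)).add_const 1
  have h3 : HasDerivAt (fun u : ℝ => 2 * u + 4) 2 s := by
    simpa using (hasDerivAt_id s).const_mul 2 |>.add_const 4
  have h4 := h3.mul h2
  have h5 : HasDerivAt (fun u : ℝ => 3 * (u - 1) ^ 2) (3 * (2 * (s - 1) ^ 1 * 1)) s :=
    (((hasDerivAt_id s).sub_const 1).pow 2).const_mul 3
  have h6 := h4.sub h5
  have : 2 * (s * Real.log s - s + 1) + (2 * s + 4) * (Real.log s + 1 - 1)
      - 3 * (2 * (s - 1) ^ 1 * 1) = 4 * kfun s := by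
    unfold kfun; ring
  rwa [this] at h6

private lemma hfun_one : hfun 1 = 0 := by simp [hfun]

private lemma hfun_cont' : Continuous hfun := by
  have h := Real.continuous_mul_log
  unfold hfun
  exact (((continuous_const.mul continuous_id').add continuous_const).mul
    ((h.sub continuous_id').add continuous_const)).sub (by fun_prop)

/-- pointwise Pinsker inequality, normalized form -/
lemma hfun_nonneg {t : ℝ} (ht : 0 < t) :
    3 * (t - 1) ^ 2 ≤ (2 * t + 4) * (t * Real.log t - t + 1) := by
  have key : 0 ≤ hfun t := by
    rcases le_or_gt 1 t with h | h
    · have mono : MonotoneOn hfun (Set.Icc 1 t) := by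
        apply monotoneOn_of_deriv_nonneg (convex_Icc 1 t) hfun_cont'.continuousOn
        · intro s hs
          rw [interior_Icc] at hs
          exact (hfun_hasDeriv (lt_trans one_pos hs.1)).differentiableAt.differentiableWithinAt
        · intro s hs
          rw [interior_Icc] at hs
          rw [(hfun_hasDeriv (lt_trans one_pos hs.1)).deriv]
          have := kfun_nonneg (le_of_lt hs.1)
          linarith
      have := mono (Set.mem_Icc.2 ⟨le_refl 1, h⟩) (Set.mem_Icc.2 ⟨h, le_refl t⟩) h
      rwa [hfun_one] at this
    · have anti : AntitoneOn hfun (Set.Icc t 1) := by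
        apply antitoneOn_of_deriv_nonpos (convex_Icc t 1) hfun_cont'.continuousOn
        · intro s hs
          rw [interior_Icc] at hs
          exact (hfun_hasDeriv (lt_trans ht hs.1)).differentiableAt.differentiableWithinAt
        · intro s hs
          rw [interior_Icc] at hs
          rw [(hfun_hasDeriv (lt_trans ht hs.1)).deriv]
          have := kfun_nonpos (lt_trans ht hs.1) (le_of_lt hs.2)
          linarith
      have := anti (Set.mem_Icc.2 ⟨le_refl t, le_of_lt h⟩)
        (Set.mem_Icc.2 ⟨le_of_lt h, le_refl 1⟩) (le_of_lt h)
      rwa [hfun_one] at this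
  unfold hfun at key
  linarith

/-- pointwise Pinsker inequality -/
lemma pinsker_pointwise {x y : ℝ} (hx : 0 ≤ x) (hy : 0 ≤ y) (habs : y = 0 → x = 0) :
    3 * (x - y) ^ 2 ≤ (2 * x + 4 * y) * (klT x y - x + y) := by
  rcases eq_or_lt_of_le hy with h | hy'
  · rw [← h] at habs ⊢
    rw [habs rfl, klT_zero]
    norm_num
  · rcases eq_or_lt_of_le hx with h | hx'
    · rw [← h, klT_zero]
      nlinarith
    · have ht : 0 < x / y := by positivity
      have key := hfun_nonneg ht
      have hxy : x / y * y = x := by field_simp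
      have hlog : Real.log (x / y) = Real.log (x / y) := rfl
      have key2 := mul_le_mul_of_nonneg_left key (le_of_lt (mul_pos hy' hy'))
      unfold klT
      set L := Real.log (x / y) with hL
      have e1 : y * y * (3 * (x / y - 1) ^ 2) = 3 * (x - y) ^ 2 := by
        field_simp
      have e2 : y * y * ((2 * (x / y) + 4) * (x / y * L - x / y + 1))
          = (2 * x + 4 * y) * (x * L - x + y) := by
        field_simp
      rw [e1, e2] at key2
      exact key2


variable {Ω α β γ : Type} [Fintype Ω] [Fintype α] [Fintype β] [Fintype γ]

/-- Gibbs' inequality (nonnegativity of KL divergence) -/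
lemma sum_klT_nonneg {u v : γ → ℝ} (hu : ∀ c, 0 ≤ u c) (hv : ∀ c, 0 ≤ v c)
    (habs : ∀ c, v c = 0 → u c = 0) (hsum : ∑ c, v c ≤ ∑ c, u c) :
    0 ≤ ∑ c, klT (u c) (v c) := by
  have h : ∑ c, (u c - v c) ≤ ∑ c, klT (u c) (v c) :=
    Finset.sum_le_sum fun c _ => sub_le_klT (hu c) (hv c) (habs c)
  rw [Finset.sum_sub_distrib] at h
  linarith

/-- Pinsker's inequality, discrete form -/
lemma pinsker_sum {u v : γ → ℝ} (hu : ∀ c, 0 ≤ u c) (hv : ∀ c, 0 ≤ v c)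
    (hu1 : ∑ c, u c = 1) (hv1 : ∑ c, v c = 1)
    (habs : ∀ c, v c = 0 → u c = 0) :
    ∑ c, |u c - v c| ≤ Real.sqrt (2 * ∑ c, klT (u c) (v c)) := by
  set g : γ → ℝ := fun c => klT (u c) (v c) - u c + v c with hg
  have hg0 : ∀ c, 0 ≤ g c := fun c => by
    have := sub_le_klT (hu c) (hv c) (habs c); simp only [hg]; linarith
  have hf0 : ∀ c, 0 ≤ (2 * u c + 4 * v c) / 3 := fun c => by
    have := hu c; have := hv c; positivity
  set r : γ → ℝ := fun c => Real.sqrt ((2 * u c + 4 * v c) / 3 * g c) with hr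
  have habs_r : ∀ c, |u c - v c| ≤ r c := fun c => by
    rw [hr]
    have h1 : (u c - v c) ^ 2 ≤ (2 * u c + 4 * v c) / 3 * g c := by
      have := pinsker_pointwise (hu c) (hv c) (habs c)
      simp only [hg]
      nlinarith
    calc |u c - v c| = Real.sqrt ((u c - v c) ^ 2) := (Real.sqrt_sq_eq_abs _).symm
      _ ≤ _ := Real.sqrt_le_sqrt h1
  have hCS : (∑ c, r c) ^ 2 ≤ (∑ c, (2 * u c + 4 * v c) / 3) * ∑ c, g c := by
    apply Finset.sum_sq_le_sum_mul_sum_of_sq_eq_mul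
    · exact fun c _ => hf0 c
    · exact fun c _ => hg0 c
    · intro c _
      rw [hr]
      exact Real.sq_sqrt (mul_nonneg (hf0 c) (hg0 c))
  have hsum_f : ∑ c, (2 * u c + 4 * v c) / 3 = 2 := by
    rw [← Finset.sum_div, Finset.sum_add_distrib, ← Finset.mul_sum, ← Finset.mul_sum,
      hu1, hv1]
    norm_num
  have hsum_g : ∑ c, g c = ∑ c, klT (u c) (v c) := by
    simp only [hg]
    rw [Finset.sum_add_distrib, Finset.sum_sub_distrib, hu1, hv1]
    ring
  rw [hsum_f, hsum_g] at hCS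
  have hrsum : 0 ≤ ∑ c, r c := Finset.sum_nonneg fun c _ => Real.sqrt_nonneg _
  have h2 : ∑ c, |u c - v c| ≤ ∑ c, r c := Finset.sum_le_sum fun c _ => habs_r c
  have h3 : (∑ c, |u c - v c|) ^ 2 ≤ 2 * ∑ c, klT (u c) (v c) := by
    calc (∑ c, |u c - v c|) ^ 2 ≤ (∑ c, r c) ^ 2 := by
          apply pow_le_pow_left₀ (Finset.sum_nonneg fun c _ => abs_nonneg _) h2
      _ ≤ _ := hCS
  rw [show (2 : ℝ) * ∑ c, klT (u c) (v c) = 2 * ∑ c, klT (u c) (v c) from rfl]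
  exact (Real.le_sqrt (Finset.sum_nonneg fun c _ => abs_nonneg _)
    (by nlinarith [sq_nonneg (∑ c, |u c - v c|)])).2 h3

/-- conditional entropy decomposition -/
lemma ent_cond_decomp (p : Ω → ℝ) (hp : ∀ ω, 0 ≤ p ω) (f : Ω → α) (g : Ω → β) :
    ∑ b, pushf p g b *
        ent (fun a => pushf p (fun ω => (f ω, g ω)) (a, b) / pushf p g b)
      = ent (pushf p (fun ω => (f ω, g ω))) - ent (pushf p g) := by
  have key : ∀ b : β, pushf p g b *
      ent (fun a => pushf p (fun ω => (f ω, g ω)) (a, b) / pushf p g b)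
      = (∑ a, Real.negMulLog (pushf p (fun ω => (f ω, g ω)) (a, b)))
        - Real.negMulLog (pushf p g b) := by
    intro b
    set w := pushf p g b with hw
    have hw0 : 0 ≤ w := pushf_nonneg hp g b
    have hmarg : ∑ a, pushf p (fun ω => (f ω, g ω)) (a, b) = w := pushf_pair_snd p f g b
    rcases eq_or_lt_of_le hw0 with h | h
    · have hz : ∀ a : α, pushf p (fun ω => (f ω, g ω)) (a, b) = 0 := by
        intro a
        have := (Finset.sum_eq_zero_iff_of_nonneg
          (fun a _ => pushf_nonneg hp _ (a, b))).1 (by rw [hmarg, ← h])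
        exact this a (Finset.mem_univ a)
      rw [← h]
      simp [hz, ent]
    · unfold ent
      rw [Finset.mul_sum]
      have hterm : ∀ a : α,
          w * Real.negMulLog (pushf p (fun ω => (f ω, g ω)) (a, b) / w)
            = Real.negMulLog (pushf p (fun ω => (f ω, g ω)) (a, b))
              + pushf p (fun ω => (f ω, g ω)) (a, b) * Real.log w := by
        intro a
        set x := pushf p (fun ω => (f ω, g ω)) (a, b) with hx
        have hx0 : 0 ≤ x := pushf_nonneg hp _ _
        rcases eq_or_lt_of_le hx0 with h' | h'
        · rw [← h']
          simp
        · rw [Real.negMulLog, Real.negMulLog, Real.log_div (ne_of_gt h') (ne_of_gt h)]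
          field_simp
          ring
      rw [Finset.sum_congr rfl (fun a _ => hterm a), Finset.sum_add_distrib,
        ← Finset.sum_mul, hmarg, Real.negMulLog]
      ring
  rw [Finset.sum_congr rfl (fun b _ => key b), Finset.sum_sub_distrib]
  have hswap : ∑ b, ∑ a, Real.negMulLog (pushf p (fun ω => (f ω, g ω)) (a, b))
      = ent (pushf p (fun ω => (f ω, g ω))) := by
    rw [ent, Fintype.sum_prod_type_right]
  rw [hswap]
  rfl

/-- nonnegativity of conditional entropy: the marginal has smaller entropy -/
lemma ent_snd_le (p : Ω → ℝ) (hp : ∀ ω, 0 ≤ p ω) (f : Ω → α) (g : Ω → β) :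
    ent (pushf p g) ≤ ent (pushf p (fun ω => (f ω, g ω))) := by
  have h := ent_cond_decomp p hp f g
  have h2 : 0 ≤ ∑ b, pushf p g b *
      ent (fun a => pushf p (fun ω => (f ω, g ω)) (a, b) / pushf p g b) := by
    apply Finset.sum_nonneg
    intro b _
    set w := pushf p g b with hw
    have hw0 : 0 ≤ w := pushf_nonneg hp g b
    rcases eq_or_lt_of_le hw0 with h' | h'
    · rw [← h', zero_mul]
    · apply mul_nonneg (le_of_lt h')
      apply ent_nonneg
      · intro a
        exact div_nonneg (pushf_nonneg hp _ _) hw0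
      · rw [← Finset.sum_div, pushf_pair_snd p f g b, ← hw, div_self (ne_of_gt h')]
  linarith

/-- KL divergence against the product of marginals, in terms of entropies -/
lemma klT_joint_eq (J : α × β → ℝ) (hJ : ∀ z, 0 ≤ J z) (F : α → ℝ) (S : β → ℝ)
    (hF : ∀ a, F a = ∑ b, J (a, b)) (hS : ∀ b, S b = ∑ a, J (a, b)) :
    ∑ z : α × β, klT (J z) (F z.1 * S z.2) = ent F + ent S - ent J := by
  have hFpos : ∀ z : α × β, J z ≠ 0 → 0 < F z.1 := by
    intro z hz
    have h1 : J z ≤ F z.1 := by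
      rw [hF]
      exact Finset.single_le_sum (fun b _ => hJ (z.1, b)) (Finset.mem_univ z.2)
    have := lt_of_le_of_ne (hJ z) (Ne.symm hz)
    linarith
  have hSpos : ∀ z : α × β, J z ≠ 0 → 0 < S z.2 := by
    intro z hz
    have h1 : J z ≤ S z.2 := by
      rw [hS]
      exact Finset.single_le_sum (fun a _ => hJ (a, z.2)) (Finset.mem_univ z.1)
    have := lt_of_le_of_ne (hJ z) (Ne.symm hz)
    linarith
  have hterm : ∀ z : α × β, klT (J z) (F z.1 * S z.2)
      = (- Real.negMulLog (J z)) - J z * Real.log (F z.1) - J z * Real.log (S z.2) := by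
    intro z
    rcases eq_or_ne (J z) 0 with h | h
    · rw [h, klT_zero]
      simp
    · have hFp := hFpos z h
      have hSp := hSpos z h
      have hJp := lt_of_le_of_ne (hJ z) (Ne.symm h)
      unfold klT
      rw [Real.log_div (ne_of_gt hJp) (by positivity),
        Real.log_mul (ne_of_gt hFp) (ne_of_gt hSp), Real.negMulLog]
      ring
  rw [Finset.sum_congr rfl (fun z _ => hterm z)]
  rw [Finset.sum_sub_distrib, Finset.sum_sub_distrib]
  have e1 : ∑ z : α × β, - Real.negMulLog (J z) = - ent J := by
    rw [ent, ← Finset.sum_neg_distrib]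
  have e2 : ∑ z : α × β, J z * Real.log (F z.1) = - ent F := by
    rw [Fintype.sum_prod_type]
    have : ∀ a, ∑ b, J (a, b) * Real.log (F a) = - Real.negMulLog (F a) := by
      intro a
      rw [← Finset.sum_mul, ← hF, Real.negMulLog]
      ring
    rw [Finset.sum_congr rfl (fun a _ => this a), ent, ← Finset.sum_neg_distrib]
  have e3 : ∑ z : α × β, J z * Real.log (S z.2) = - ent S := by
    rw [Fintype.sum_prod_type_right]
    have : ∀ b, ∑ a, J (a, b) * Real.log (S b) = - Real.negMulLog (S b) := by
      intro b
      rw [← Finset.sum_mul, ← hS, Real.negMulLog]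
      ring
    rw [Finset.sum_congr rfl (fun b _ => this b), ent, ← Finset.sum_neg_distrib]
  rw [e1, e2, e3]
  ring


section Core

variable {O : Type} [Fintype O] {n N : ℕ}

/-- truncated record of the outputs of the second device -/
def trunc (d : Fin n → O) (t : ℕ) (X : Fin (N + 1) → Fin n → O) : Fin N → Fin n → O :=
  fun k => if (k : ℕ) < t then X k.succ else d

lemma trunc_zero (d : Fin n → O) : (trunc d 0 : (Fin (N + 1) → Fin n → O) → _)
    = fun _ => (fun _ => d) := by
  funext X k
  simp [trunc]

lemma trunc_succ_fst (d : Fin n → O) (j : Fin N) (X : Fin (N + 1) → Fin n → O) :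
    trunc d ((j : ℕ) + 1) X j = X j.succ := by
  simp [trunc]

lemma update_trunc (d : Fin n → O) (j : Fin N) (X : Fin (N + 1) → Fin n → O) :
    Function.update (trunc d ((j : ℕ) + 1) X) j d = trunc d (j : ℕ) X := by
  funext k
  rcases eq_or_ne k j with h | h
  · subst h
    simp [trunc, Function.update]
  · rw [Function.update_of_ne h]
    have hkj : (k : ℕ) ≠ (j : ℕ) := fun hc => h (Fin.ext hc)
    simp only [trunc]
    rcases lt_or_ge (k : ℕ) (j : ℕ) with hlt | hge
    · rw [if_pos hlt, if_pos (Nat.lt_succ_of_lt hlt)]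
    · have h1 : ¬ (k : ℕ) < (j : ℕ) := not_lt.2 hge
      have h2 : ¬ (k : ℕ) < (j : ℕ) + 1 := by
        omega
      rw [if_neg h1, if_neg h2]

/-- the recoding map for the second coordinate -/
lemma e1_inj (d : Fin n → O) (j : Fin N) :
    Function.Injective (fun c : Fin N → Fin n → O => (c j, Function.update c j d)) := by
  intro c c' h
  simp only [Prod.mk.injEq] at h
  obtain ⟨h1, h2⟩ := h
  funext k
  rcases eq_or_ne k j with hk | hk
  · rw [hk]; exact h1
  · have := congrFun h2 k
    rwa [Function.update_of_ne hk, Function.update_of_ne hk] at this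

lemma e2_inj (d : Fin n → O) (j : Fin N) :
    Function.Injective (fun z : (Fin n → O) × (Fin N → Fin n → O) =>
      ((z.1, z.2 j), Function.update z.2 j d)) := by
  intro z z' h
  simp only [Prod.mk.injEq] at h
  obtain ⟨⟨h1, h2⟩, h3⟩ := h
  have h4 := e1_inj d j (show _ from Prod.ext h2 h3)
  exact Prod.ext h1 h4

variable (p : (Fin (N + 1) → Fin n → O) → ℝ) (d : Fin n → O)

/-- entropy of the first device given the first `t` outputs of the second device -/
def Gf (t : ℕ) : ℝ :=
  ent (pushf p (fun X => (X 0, trunc d t X))) - ent (pushf p (trunc d t))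

/-- conditional mutual information summand -/
def klcond (j : Fin N) (Y : Fin N → Fin n → O) : ℝ :=
  ∑ z : (Fin n → O) × (Fin n → O),
    klT (pushf p (fun X => ((X 0, X j.succ), trunc d (j : ℕ) X)) (z, Y)
          / pushf p (trunc d (j : ℕ)) Y)
      ((pushf p (fun X => (X 0, trunc d (j : ℕ) X)) (z.1, Y)
          / pushf p (trunc d (j : ℕ)) Y) *
       (pushf p (fun X => (X j.succ, trunc d (j : ℕ) X)) (z.2, Y)
          / pushf p (trunc d (j : ℕ)) Y))

variable {p}

lemma marg_fst (hp : ∀ X, 0 ≤ p X) (j : Fin N) (x1 : Fin n → O) (Y : Fin N → Fin n → O) :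
    ∑ x2 : Fin n → O, pushf p (fun X => ((X 0, X j.succ), trunc d (j : ℕ) X)) ((x1, x2), Y)
      = pushf p (fun X => (X 0, trunc d (j : ℕ) X)) (x1, Y) := by
  have hrecode : ∀ x2 : Fin n → O,
      pushf p (fun X => ((X 0, X j.succ), trunc d (j : ℕ) X)) ((x1, x2), Y)
        = pushf p (fun X => (X j.succ, (X 0, trunc d (j : ℕ) X))) (x2, (x1, Y)) := by
    intro x2
    have hinj : Function.Injective
        (fun z : (Fin n → O) × ((Fin n → O) × (Fin N → Fin n → O)) =>
          ((z.2.1, z.1), z.2.2)) := by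
      intro z z' h
      simp only [Prod.mk.injEq] at h
      obtain ⟨⟨h1, h2⟩, h3⟩ := h
      exact Prod.ext h2 (Prod.ext h1 h3)
    have := pushf_comp_inj (p := p) hinj (fun X => (X j.succ, (X 0, trunc d (j : ℕ) X)))
      (x2, (x1, Y))
    simpa using this
  rw [Finset.sum_congr rfl (fun x2 _ => hrecode x2)]
  exact pushf_pair_snd p (fun X => X j.succ) (fun X => (X 0, trunc d (j : ℕ) X)) (x1, Y)

lemma marg_snd (hp : ∀ X, 0 ≤ p X) (j : Fin N) (x2 : Fin n → O) (Y : Fin N → Fin n → O) :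
    ∑ x1 : Fin n → O, pushf p (fun X => ((X 0, X j.succ), trunc d (j : ℕ) X)) ((x1, x2), Y)
      = pushf p (fun X => (X j.succ, trunc d (j : ℕ) X)) (x2, Y) := by
  have hrecode : ∀ x1 : Fin n → O,
      pushf p (fun X => ((X 0, X j.succ), trunc d (j : ℕ) X)) ((x1, x2), Y)
        = pushf p (fun X => (X 0, (X j.succ, trunc d (j : ℕ) X))) (x1, (x2, Y)) := by
    intro x1
    have hinj : Function.Injective
        (fun z : (Fin n → O) × ((Fin n → O) × (Fin N → Fin n → O)) =>
          ((z.1, z.2.1), z.2.2)) := by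
      intro z z' h
      simp only [Prod.mk.injEq] at h
      obtain ⟨⟨h1, h2⟩, h3⟩ := h
      exact Prod.ext h1 (Prod.ext h2 h3)
    have := pushf_comp_inj (p := p) hinj (fun X => (X 0, (X j.succ, trunc d (j : ℕ) X)))
      (x1, (x2, Y))
    simpa using this
  rw [Finset.sum_congr rfl (fun x1 _ => hrecode x1)]
  exact pushf_pair_snd p (fun X => X 0) (fun X => (X j.succ, trunc d (j : ℕ) X)) (x2, Y)

lemma klsum_eq (hp : ∀ X, 0 ≤ p X) (j : Fin N) :
    ∑ Y, pushf p (trunc d (j : ℕ)) Y * klcond p d j Y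
      = Gf p d (j : ℕ) - Gf p d ((j : ℕ) + 1) := by
  set τ := (trunc d (j : ℕ) : (Fin (N + 1) → Fin n → O) → _) with hτ
  have key : ∀ Y, pushf p τ Y * klcond p d j Y
      = pushf p τ Y * ent (fun x1 => pushf p (fun X => (X 0, τ X)) (x1, Y) / pushf p τ Y)
        + pushf p τ Y * ent (fun x2 => pushf p (fun X => (X j.succ, τ X)) (x2, Y) / pushf p τ Y)
        - pushf p τ Y *
            ent (fun z => pushf p (fun X => ((X 0, X j.succ), τ X)) (z, Y) / pushf p τ Y) := by
    intro Y
    set W := pushf p τ Y with hW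
    have hW0 : 0 ≤ W := pushf_nonneg hp τ Y
    rcases eq_or_lt_of_le hW0 with h | h
    · rw [← h]
      have hJ0 : ∀ z : (Fin n → O) × (Fin n → O),
          pushf p (fun X => ((X 0, X j.succ), τ X)) (z, Y) / W = 0 := by
        intro z
        rw [← h, div_zero]
      simp only [klcond, ← hW]
      rw [Finset.sum_congr rfl (fun z _ => by rw [hJ0 z, klT_zero])]
      simp
    · have hkl := klT_joint_eq
        (fun z : (Fin n → O) × (Fin n → O) =>
          pushf p (fun X => ((X 0, X j.succ), τ X)) (z, Y) / W)
        (fun z => div_nonneg (pushf_nonneg hp _ _) hW0)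
        (F := fun x1 => pushf p (fun X => (X 0, τ X)) (x1, Y) / W)
        (S := fun x2 => pushf p (fun X => (X j.succ, τ X)) (x2, Y) / W)
        (fun x1 => by rw [← Finset.sum_div, marg_fst d hp j x1 Y])
        (fun x2 => by rw [← Finset.sum_div, marg_snd d hp j x2 Y])
      have hkl2 : klcond p d j Y = ∑ z : (Fin n → O) × (Fin n → O),
          klT (pushf p (fun X => ((X 0, X j.succ), τ X)) (z, Y) / W)
            ((fun x1 => pushf p (fun X => (X 0, τ X)) (x1, Y) / W) z.1 *
             (fun x2 => pushf p (fun X => (X j.succ, τ X)) (x2, Y) / W) z.2) := rfl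
      rw [hkl2, hkl]
      ring
  rw [Finset.sum_congr rfl (fun Y _ => key Y), Finset.sum_sub_distrib,
    Finset.sum_add_distrib]
  rw [ent_cond_decomp p hp (fun X => X 0) τ,
    ent_cond_decomp p hp (fun X => X j.succ) τ,
    ent_cond_decomp p hp (fun X => (X 0, X j.succ)) τ]
  have hB : ent (pushf p (fun X => (X j.succ, τ X)))
      = ent (pushf p (trunc d ((j : ℕ) + 1))) := by
    have hcomp : (fun X : Fin (N + 1) → Fin n → O => (X j.succ, τ X))
        = fun X => (fun c : Fin N → Fin n → O => (c j, Function.update c j d))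
            (trunc d ((j : ℕ) + 1) X) := by
      funext X
      simp only [hτ]
      rw [trunc_succ_fst d j X, update_trunc d j X]
    rw [hcomp]
    exact ent_comp_inj p (e1_inj d j) (trunc d ((j : ℕ) + 1))
  have hAB : ent (pushf p (fun X => ((X 0, X j.succ), τ X)))
      = ent (pushf p (fun X => (X 0, trunc d ((j : ℕ) + 1) X))) := by
    have hcomp : (fun X : Fin (N + 1) → Fin n → O => ((X 0, X j.succ), τ X))
        = fun X => (fun z : (Fin n → O) × (Fin N → Fin n → O) =>
            ((z.1, z.2 j), Function.update z.2 j d)) (X 0, trunc d ((j : ℕ) + 1) X) := by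
      funext X
      simp only [hτ]
      rw [trunc_succ_fst d j X, update_trunc d j X]
    rw [hcomp]
    exact ent_comp_inj p (e2_inj d j) (fun X => (X 0, trunc d ((j : ℕ) + 1) X))
  rw [hB, hAB]
  unfold Gf
  ring

lemma ent_trunc_zero (hp1 : ∑ X, p X = 1) :
    ent (pushf p (trunc d 0 : (Fin (N + 1) → Fin n → O) → _)) = 0 := by
  have hinj : Function.Injective (fun _ : Unit => (fun _ => d : Fin N → Fin n → O)) := by
    intro a b _
    rfl
  have hcomp : (trunc d 0 : (Fin (N + 1) → Fin n → O) → _)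
      = fun X => (fun _ : Unit => (fun _ => d : Fin N → Fin n → O)) () := by
    rw [trunc_zero]
  rw [hcomp]
  rw [show (fun X : Fin (N + 1) → Fin n → O =>
      (fun _ : Unit => (fun _ => d : Fin N → Fin n → O)) ())
    = fun X => (fun _ : Unit => (fun _ => d : Fin N → Fin n → O)) ((fun _ => ()) X) from rfl]
  rw [ent_comp_inj p hinj (fun _ => ())]
  have hval : pushf p (fun _ : Fin (N + 1) → Fin n → O => ()) () = 1 := by
    unfold pushf
    rw [Finset.sum_filter]
    simpa using hp1
  unfold ent
  rw [Fintype.sum_unique, hval, Real.negMulLog_one]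

lemma Gf_zero_eq (hp1 : ∑ X, p X = 1) :
    Gf p d 0 = ent (pushf p (fun X : Fin (N + 1) → Fin n → O => X 0)) := by
  unfold Gf
  rw [ent_trunc_zero d hp1]
  have hinj : Function.Injective
      (fun a : Fin n → O => (a, (fun _ => d : Fin N → Fin n → O))) := by
    intro a b h
    exact congrArg Prod.fst h
  have hcomp : (fun X : Fin (N + 1) → Fin n → O => (X 0, trunc d 0 X))
      = fun X => (fun a : Fin n → O => (a, (fun _ => d : Fin N → Fin n → O))) (X 0) := by
    funext X
    rw [trunc_zero]
  rw [hcomp, ent_comp_inj p hinj (fun X => X 0)]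
  ring

/-- the chain rule bound: total conditional mutual information is at most `log |𝒜|`. -/
lemma chain_bound (hp : ∀ X, 0 ≤ p X) (hp1 : ∑ X, p X = 1) :
    ∑ j : Fin N, ∑ Y, pushf p (trunc d (j : ℕ)) Y * klcond p d j Y
      ≤ (n : ℝ) * Real.log (Fintype.card O) := by
  rw [Finset.sum_congr rfl (fun j _ => klsum_eq d hp j)]
  have htel : ∑ j : Fin N, (Gf p d (j : ℕ) - Gf p d ((j : ℕ) + 1))
      = Gf p d 0 - Gf p d N := by
    rw [Fin.sum_univ_eq_sum_range (fun i => Gf p d i - Gf p d (i + 1)) N]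
    exact Finset.sum_range_sub' (Gf p d) N
  rw [htel]
  have hGN : 0 ≤ Gf p d N := by
    unfold Gf
    have := ent_snd_le p hp (fun X : Fin (N + 1) → Fin n → O => X 0) (trunc d N)
    linarith
  have hG0 : Gf p d 0 ≤ (n : ℝ) * Real.log (Fintype.card O) := by
    rw [Gf_zero_eq d hp1]
    have h1 : ent (pushf p (fun X : Fin (N + 1) → Fin n → O => X 0))
        ≤ Real.log (Fintype.card (Fin n → O)) := by
      apply ent_le_log_card (fun a => pushf_nonneg hp _ a)
      rw [sum_pushf, hp1]
    have h2 : (Fintype.card (Fin n → O) : ℝ) = (Fintype.card O : ℝ) ^ n := by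
      rw [Fintype.card_fun, Fintype.card_fin]
      push_cast
      ring
    rw [h2, Real.log_pow] at h1
    exact_mod_cast h1
  linarith

end Core


section Bridge

variable {O I : Type} [Fintype O] [Fintype I] {n N : ℕ}
variable (P : (Fin (N + 1) → Fin n → I) → (Fin (N + 1) → Fin n → O) → ℝ)

lemma agree_iff (d : Fin n → O) (j : Fin N) (X0 X : Fin (N + 1) → Fin n → O) :
    priorAgree j (fun k => X0 k.succ) X ↔ trunc d (j : ℕ) X = trunc d (j : ℕ) X0 := by
  constructor
  · intro h
    funext k
    simp only [trunc]
    split_ifs with hk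
    · exact h k hk
    · rfl
  · intro h k hk
    have h2 := congrFun h k
    simp only [trunc, if_pos (show (k : ℕ) < (j : ℕ) from hk)] at h2
    exact h2

lemma priorProb_eq (d : Fin n → O) (j : Fin N) (U : Fin (N + 1) → Fin n → I)
    (X0 : Fin (N + 1) → Fin n → O) :
    priorProb P j U (fun k => X0 k.succ)
      = pushf (P U) (trunc d (j : ℕ)) (trunc d (j : ℕ) X0) := by
  apply Finset.sum_congr _ (fun _ _ => rfl)
  ext X
  simp only [Finset.mem_filter, Finset.mem_univ, true_and]
  exact agree_iff d j X0 X

lemma tildeJoint_eq (d : Fin n → O) (j : Fin N) (U : Fin (N + 1) → Fin n → I)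
    (X0 : Fin (N + 1) → Fin n → O) (x1 x2 : Fin n → O) :
    tildeJoint P j U (fun k => X0 k.succ) x1 x2
      = pushf (P U) (fun X => ((X 0, X j.succ), trunc d (j : ℕ) X))
          ((x1, x2), trunc d (j : ℕ) X0)
        / pushf (P U) (trunc d (j : ℕ)) (trunc d (j : ℕ) X0) := by
  rw [tildeJoint, priorProb_eq P d j U X0]
  congr 1
  apply Finset.sum_congr _ (fun _ _ => rfl)
  ext X
  simp only [Finset.mem_filter, Finset.mem_univ, true_and, Prod.ext_iff]
  rw [agree_iff d j X0 X]
  tauto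

lemma tildeFst_eq (d : Fin n → O) (j : Fin N) (U : Fin (N + 1) → Fin n → I)
    (X0 : Fin (N + 1) → Fin n → O) (x1 : Fin n → O) :
    tildeFst P j U (fun k => X0 k.succ) x1
      = pushf (P U) (fun X => (X 0, trunc d (j : ℕ) X)) (x1, trunc d (j : ℕ) X0)
        / pushf (P U) (trunc d (j : ℕ)) (trunc d (j : ℕ) X0) := by
  rw [tildeFst, priorProb_eq P d j U X0]
  congr 1
  apply Finset.sum_congr _ (fun _ _ => rfl)
  ext X
  simp only [Finset.mem_filter, Finset.mem_univ, true_and, Prod.ext_iff]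
  rw [agree_iff d j X0 X]
  tauto

lemma tildeSnd_eq (d : Fin n → O) (j : Fin N) (U : Fin (N + 1) → Fin n → I)
    (X0 : Fin (N + 1) → Fin n → O) (x2 : Fin n → O) :
    tildeSnd P j U (fun k => X0 k.succ) x2
      = pushf (P U) (fun X => (X j.succ, trunc d (j : ℕ) X)) (x2, trunc d (j : ℕ) X0)
        / pushf (P U) (trunc d (j : ℕ)) (trunc d (j : ℕ) X0) := by
  rw [tildeSnd, priorProb_eq P d j U X0]
  congr 1
  apply Finset.sum_congr _ (fun _ _ => rfl)
  ext X
  simp only [Finset.mem_filter, Finset.mem_univ, true_and, Prod.ext_iff]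
  rw [agree_iff d j X0 X]
  tauto

end Bridge

section Fiber

variable {Ω α : Type} [Fintype Ω] [Fintype α]

lemma sum_comp_pushf (p : Ω → ℝ) (f : Ω → α) (φ : α → ℝ) :
    ∑ ω, p ω * φ (f ω) = ∑ a, pushf p f a * φ a := by
  rw [← Finset.sum_fiberwise Finset.univ f (fun ω => p ω * φ (f ω))]
  refine Finset.sum_congr rfl fun a _ => ?_
  rw [pushf, Finset.sum_mul]
  refine Finset.sum_congr rfl fun ω hω => ?_
  rw [(Finset.mem_filter.1 hω).2]

end Fiber


section StepA

variable {O : Type} [Fintype O] {n N : ℕ}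
variable {p : (Fin (N + 1) → Fin n → O) → ℝ} (d : Fin n → O)

lemma sum_triple_marg (j : Fin N) (Y : Fin N → Fin n → O) :
    ∑ z : (Fin n → O) × (Fin n → O),
        pushf p (fun X => ((X 0, X j.succ), trunc d (j : ℕ) X)) (z, Y)
      = pushf p (trunc d (j : ℕ)) Y :=
  pushf_pair_snd p (fun X => (X 0, X j.succ)) (trunc d (j : ℕ)) Y

lemma sum_fst_marg (j : Fin N) (Y : Fin N → Fin n → O) :
    ∑ x1 : Fin n → O, pushf p (fun X => (X 0, trunc d (j : ℕ) X)) (x1, Y)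
      = pushf p (trunc d (j : ℕ)) Y :=
  pushf_pair_snd p (fun X => X 0) (trunc d (j : ℕ)) Y

lemma sum_snd_marg (j : Fin N) (Y : Fin N → Fin n → O) :
    ∑ x2 : Fin n → O, pushf p (fun X => (X j.succ, trunc d (j : ℕ) X)) (x2, Y)
      = pushf p (trunc d (j : ℕ)) Y :=
  pushf_pair_snd p (fun X => X j.succ) (trunc d (j : ℕ)) Y

lemma cond_abs (hp : ∀ X, 0 ≤ p X) (j : Fin N) (Y : Fin N → Fin n → O)
    (hW : 0 < pushf p (trunc d (j : ℕ)) Y) (z : (Fin n → O) × (Fin n → O))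
    (hv : (pushf p (fun X => (X 0, trunc d (j : ℕ) X)) (z.1, Y)
            / pushf p (trunc d (j : ℕ)) Y) *
          (pushf p (fun X => (X j.succ, trunc d (j : ℕ) X)) (z.2, Y)
            / pushf p (trunc d (j : ℕ)) Y) = 0) :
    pushf p (fun X => ((X 0, X j.succ), trunc d (j : ℕ) X)) (z, Y)
      / pushf p (trunc d (j : ℕ)) Y = 0 := by
  set W := pushf p (trunc d (j : ℕ)) Y with hWdef
  have hWne : W ≠ 0 := ne_of_gt hW
  rcases mul_eq_zero.1 hv with h | h
  · have hF : pushf p (fun X => (X 0, trunc d (j : ℕ) X)) (z.1, Y) = 0 := by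
      field_simp at h
      simpa using h
    have hle : pushf p (fun X => ((X 0, X j.succ), trunc d (j : ℕ) X)) (z, Y)
        ≤ pushf p (fun X => (X 0, trunc d (j : ℕ) X)) (z.1, Y) := by
      rw [← marg_fst d hp j z.1 Y]
      have := Finset.single_le_sum
        (f := fun x2 => pushf p (fun X => ((X 0, X j.succ), trunc d (j : ℕ) X)) ((z.1, x2), Y))
        (fun x2 _ => pushf_nonneg hp _ _) (Finset.mem_univ z.2)
      simpa using this
    have h0 := pushf_nonneg hp (fun X => ((X 0, X j.succ), trunc d (j : ℕ) X)) (z, Y)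
    rw [hF] at hle
    rw [le_antisymm hle h0, zero_div]
  · have hS : pushf p (fun X => (X j.succ, trunc d (j : ℕ) X)) (z.2, Y) = 0 := by
      field_simp at h
      simpa using h
    have hle : pushf p (fun X => ((X 0, X j.succ), trunc d (j : ℕ) X)) (z, Y)
        ≤ pushf p (fun X => (X j.succ, trunc d (j : ℕ) X)) (z.2, Y) := by
      rw [← marg_snd d hp j z.2 Y]
      have := Finset.single_le_sum
        (f := fun x1 => pushf p (fun X => ((X 0, X j.succ), trunc d (j : ℕ) X)) ((x1, z.2), Y))
        (fun x1 _ => pushf_nonneg hp _ _) (Finset.mem_univ z.1)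
      simpa using this
    have h0 := pushf_nonneg hp (fun X => ((X 0, X j.succ), trunc d (j : ℕ) X)) (z, Y)
    rw [hS] at hle
    rw [le_antisymm hle h0, zero_div]

lemma cond_sums (hp : ∀ X, 0 ≤ p X) (j : Fin N) (Y : Fin N → Fin n → O)
    (hW : 0 < pushf p (trunc d (j : ℕ)) Y) :
    (∑ z : (Fin n → O) × (Fin n → O),
        pushf p (fun X => ((X 0, X j.succ), trunc d (j : ℕ) X)) (z, Y)
          / pushf p (trunc d (j : ℕ)) Y) = 1 ∧
    (∑ z : (Fin n → O) × (Fin n → O),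
        (pushf p (fun X => (X 0, trunc d (j : ℕ) X)) (z.1, Y)
          / pushf p (trunc d (j : ℕ)) Y) *
        (pushf p (fun X => (X j.succ, trunc d (j : ℕ) X)) (z.2, Y)
          / pushf p (trunc d (j : ℕ)) Y)) = 1 := by
  have hWne : pushf p (trunc d (j : ℕ)) Y ≠ 0 := ne_of_gt hW
  constructor
  · rw [← Finset.sum_div, sum_triple_marg d j Y, div_self hWne]
  · rw [Fintype.sum_prod_type]
    have : ∀ x1 : Fin n → O, ∑ x2 : Fin n → O,
        (pushf p (fun X => (X 0, trunc d (j : ℕ) X)) (x1, Y)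
          / pushf p (trunc d (j : ℕ)) Y) *
        (pushf p (fun X => (X j.succ, trunc d (j : ℕ) X)) (x2, Y)
          / pushf p (trunc d (j : ℕ)) Y)
        = pushf p (fun X => (X 0, trunc d (j : ℕ) X)) (x1, Y)
            / pushf p (trunc d (j : ℕ)) Y := by
      intro x1
      rw [← Finset.mul_sum, ← Finset.sum_div, sum_snd_marg d j Y, div_self hWne, mul_one]
    rw [Finset.sum_congr rfl (fun x1 _ => this x1), ← Finset.sum_div, sum_fst_marg d j Y,
      div_self hWne]

lemma klcond_nonneg (hp : ∀ X, 0 ≤ p X) (j : Fin N) (Y : Fin N → Fin n → O) :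
    0 ≤ klcond p d j Y := by
  set W := pushf p (trunc d (j : ℕ)) Y with hWdef
  have hW0 : 0 ≤ W := pushf_nonneg hp _ Y
  rcases eq_or_lt_of_le hW0 with h | h
  · have : klcond p d j Y = 0 := by
      unfold klcond
      rw [Finset.sum_congr rfl (fun z _ => by rw [← hWdef, ← h, div_zero, klT_zero])]
      exact Finset.sum_const_zero
    rw [this]
  · obtain ⟨hu1, hv1⟩ := cond_sums d hp j Y h
    unfold klcond
    apply sum_klT_nonneg
    · intro z
      exact div_nonneg (pushf_nonneg hp _ _) hW0
    · intro z
      exact mul_nonneg (div_nonneg (pushf_nonneg hp _ _) hW0)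
        (div_nonneg (pushf_nonneg hp _ _) hW0)
    · intro z hz
      exact cond_abs d hp j Y h z hz
    · rw [hu1, hv1]

lemma pinsker_klcond (hp : ∀ X, 0 ≤ p X) (j : Fin N) (Y : Fin N → Fin n → O)
    (hW : 0 < pushf p (trunc d (j : ℕ)) Y) :
    ∑ z : (Fin n → O) × (Fin n → O),
        |pushf p (fun X => ((X 0, X j.succ), trunc d (j : ℕ) X)) (z, Y)
            / pushf p (trunc d (j : ℕ)) Y
          - (pushf p (fun X => (X 0, trunc d (j : ℕ) X)) (z.1, Y)
              / pushf p (trunc d (j : ℕ)) Y) *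
            (pushf p (fun X => (X j.succ, trunc d (j : ℕ) X)) (z.2, Y)
              / pushf p (trunc d (j : ℕ)) Y)|
      ≤ Real.sqrt (2 * klcond p d j Y) := by
  obtain ⟨hu1, hv1⟩ := cond_sums d hp j Y hW
  have hW0 : 0 ≤ pushf p (trunc d (j : ℕ)) Y := le_of_lt hW
  exact pinsker_sum
    (fun z => div_nonneg (pushf_nonneg hp _ _) hW0)
    (fun z => mul_nonneg (div_nonneg (pushf_nonneg hp _ _) hW0)
      (div_nonneg (pushf_nonneg hp _ _) hW0))
    hu1 hv1 (fun z hz => cond_abs d hp j Y hW z hz)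

end StepA


section Glue

variable {O I : Type} [Fintype O] [Fintype I] {n N : ℕ}

lemma stepA (P : (Fin (N + 1) → Fin n → I) → (Fin (N + 1) → Fin n → O) → ℝ)
    (hP0 : ∀ U X, 0 ≤ P U X) (hP1 : ∀ U, ∑ X, P U X = 1)
    (d : Fin n → O) (j : Fin N) (U : Fin (N + 1) → Fin n → I) :
    ∑ X : Fin (N + 1) → Fin n → O, P U X *
        ∑ x1 : Fin n → O, ∑ x2 : Fin n → O,
          |tildeJoint P j U (fun k => X k.succ) x1 x2
            - tildeFst P j U (fun k => X k.succ) x1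
              * tildeSnd P j U (fun k => X k.succ) x2|
      ≤ Real.sqrt (2 * ∑ Y, pushf (P U) (trunc d (j : ℕ)) Y * klcond (P U) d j Y) := by
  have hp0 : ∀ X, 0 ≤ P U X := hP0 U
  have inner_eq : ∀ X0 : Fin (N + 1) → Fin n → O,
      (∑ x1 : Fin n → O, ∑ x2 : Fin n → O,
        |tildeJoint P j U (fun k => X0 k.succ) x1 x2
          - tildeFst P j U (fun k => X0 k.succ) x1
            * tildeSnd P j U (fun k => X0 k.succ) x2|)
      = ∑ z : (Fin n → O) × (Fin n → O),
          |pushf (P U) (fun X => ((X 0, X j.succ), trunc d (j : ℕ) X))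
              (z, trunc d (j : ℕ) X0) / pushf (P U) (trunc d (j : ℕ)) (trunc d (j : ℕ) X0)
            - (pushf (P U) (fun X => (X 0, trunc d (j : ℕ) X)) (z.1, trunc d (j : ℕ) X0)
                / pushf (P U) (trunc d (j : ℕ)) (trunc d (j : ℕ) X0)) *
              (pushf (P U) (fun X => (X j.succ, trunc d (j : ℕ) X)) (z.2, trunc d (j : ℕ) X0)
                / pushf (P U) (trunc d (j : ℕ)) (trunc d (j : ℕ) X0))| := by
    intro X0
    rw [Fintype.sum_prod_type]
    refine Finset.sum_congr rfl fun x1 _ => Finset.sum_congr rfl fun x2 _ => ?_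
    rw [tildeJoint_eq P d j U X0 x1 x2, tildeFst_eq P d j U X0 x1, tildeSnd_eq P d j U X0 x2]
  have step1 : ∀ X0 : Fin (N + 1) → Fin n → O,
      P U X0 * (∑ x1 : Fin n → O, ∑ x2 : Fin n → O,
        |tildeJoint P j U (fun k => X0 k.succ) x1 x2
          - tildeFst P j U (fun k => X0 k.succ) x1
            * tildeSnd P j U (fun k => X0 k.succ) x2|)
      ≤ P U X0 * Real.sqrt (2 * klcond (P U) d j (trunc d (j : ℕ) X0)) := by
    intro X0
    rcases eq_or_lt_of_le (hp0 X0) with h | h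
    · rw [← h, zero_mul, zero_mul]
    · refine mul_le_mul_of_nonneg_left ?_ (le_of_lt h)
      rw [inner_eq X0]
      apply pinsker_klcond d hp0 j (trunc d (j : ℕ) X0)
      calc (0 : ℝ) < P U X0 := h
        _ ≤ pushf (P U) (trunc d (j : ℕ)) (trunc d (j : ℕ) X0) := le_pushf hp0 _ X0
  have hkl0 : ∀ Y, 0 ≤ klcond (P U) d j Y := klcond_nonneg d hp0 j
  have hsq : (∑ X0, P U X0 * Real.sqrt (2 * klcond (P U) d j (trunc d (j : ℕ) X0))) ^ 2
      ≤ (∑ X0, P U X0) *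
        (∑ X0, P U X0 * (2 * klcond (P U) d j (trunc d (j : ℕ) X0))) := by
    apply Finset.sum_sq_le_sum_mul_sum_of_sq_eq_mul
    · exact fun X0 _ => hp0 X0
    · intro X0 _
      have := hkl0 (trunc d (j : ℕ) X0)
      have := hp0 X0
      positivity
    · intro X0 _
      rw [mul_pow, Real.sq_sqrt (by have := hkl0 (trunc d (j : ℕ) X0); positivity)]
      ring
  rw [hP1 U, one_mul] at hsq
  have hfib : ∑ X0, P U X0 * (2 * klcond (P U) d j (trunc d (j : ℕ) X0))
      = 2 * ∑ Y, pushf (P U) (trunc d (j : ℕ)) Y * klcond (P U) d j Y := by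
    rw [sum_comp_pushf (P U) (trunc d (j : ℕ)) (fun Y => 2 * klcond (P U) d j Y),
      Finset.mul_sum]
    exact Finset.sum_congr rfl fun Y _ => by ring
  rw [hfib] at hsq
  have hnn : 0 ≤ ∑ X0, P U X0 * Real.sqrt (2 * klcond (P U) d j (trunc d (j : ℕ) X0)) :=
    Finset.sum_nonneg fun X0 _ => mul_nonneg (hp0 X0) (Real.sqrt_nonneg _)
  calc ∑ X : Fin (N + 1) → Fin n → O, P U X *
        ∑ x1 : Fin n → O, ∑ x2 : Fin n → O,
          |tildeJoint P j U (fun k => X k.succ) x1 x2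
            - tildeFst P j U (fun k => X k.succ) x1
              * tildeSnd P j U (fun k => X k.succ) x2|
      ≤ ∑ X0, P U X0 * Real.sqrt (2 * klcond (P U) d j (trunc d (j : ℕ) X0)) :=
        Finset.sum_le_sum fun X0 _ => step1 X0
    _ ≤ Real.sqrt (2 * ∑ Y, pushf (P U) (trunc d (j : ℕ)) Y * klcond (P U) d j Y) := by
        have hy : 0 ≤ 2 * ∑ Y, pushf (P U) (trunc d (j : ℕ)) Y * klcond (P U) d j Y := by
          have : 0 ≤ ∑ Y, pushf (P U) (trunc d (j : ℕ)) Y * klcond (P U) d j Y :=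
            Finset.sum_nonneg fun Y _ => mul_nonneg (pushf_nonneg hp0 _ _) (hkl0 Y)
          linarith
        exact (Real.le_sqrt hnn hy).2 hsq

end Glue

end SV5

set_option maxHeartbeats 2000000 in
/-- de Finetti bound with limited randomness: selecting (via an ε-SV
source) one of `N = 2^m` blocks of the second device makes it approximately
uncorrelated with the first device, on average over the prior outputs. -/
theorem stmt_5 {O I : Type} [Fintype O] [Fintype I] (n m : ℕ) (hn : 1 ≤ n) (hm : 1 ≤ m)
    (N : ℕ) (hN : N = 2 ^ m)
    (ε : ℝ) (hε0 : 0 ≤ ε) (hε : ε < 1 / 2)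
    (P : (Fin (N + 1) → Fin n → I) → (Fin (N + 1) → Fin n → O) → ℝ)
    (hP0 : ∀ U X, 0 ≤ P U X) (hP1 : ∀ U, ∑ X, P U X = 1)
    -- no-signaling between the `N + 1` blocks
    (hNS : ∀ (S : Finset (Fin (N + 1))) (U U' : Fin (N + 1) → Fin n → I),
      (∀ b ∈ S, U b = U' b) → ∀ Xs : Fin (N + 1) → Fin n → O,
        (∑ X ∈ Finset.univ.filter (fun X => ∀ b ∈ S, X b = Xs b), P U X)
          = (∑ X ∈ Finset.univ.filter (fun X => ∀ b ∈ S, X b = Xs b), P U' X))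
    -- `ν` is the distribution of the block choice and the inputs, drawn from the SV source
    (ν : Fin N × (Fin (N + 1) → Fin n → I) → ℝ)
    (hν0 : ∀ a, 0 ≤ ν a) (hν1 : ∑ a, ν a = 1)
    -- `ν(j | U) ≤ (1/2 + ε)^{log₂ N}` (as for `m = log₂ N` bits of an ε-SV source)
    (hνSV : ∀ (j : Fin N) (U : Fin (N + 1) → Fin n → I),
      ν (j, U) ≤ (1 / 2 + ε) ^ m * ∑ j' : Fin N, ν (j', U)) :
    ∑ a : Fin N × (Fin (N + 1) → Fin n → I), ν a *
        ∑ X : Fin (N + 1) → Fin n → O, P a.2 X *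
          ∑ x1 : Fin n → O, ∑ x2 : Fin n → O,
            |tildeJoint P a.1 a.2 (fun k => X k.succ) x1 x2
              - tildeFst P a.1 a.2 (fun k => X k.succ) x1
                * tildeSnd P a.1 a.2 (fun k => X k.succ) x2|
      ≤ Real.sqrt (2 * Real.log 2 * ((N : ℝ) ^ Real.logb 2 (1 + 2 * ε))
          * ((n : ℝ) * Real.logb 2 (Fintype.card O)) / (N : ℝ)) := by
  classical
  rcases isEmpty_or_nonempty O with hO | hO
  · exfalso
    rcases isEmpty_or_nonempty I with hI | hI
    · haveI hIe : IsEmpty (Fin N × (Fin (N + 1) → Fin n → I)) :=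
        ⟨fun a => hI.false (a.2 0 ⟨0, hn⟩)⟩
      rw [Finset.univ_eq_empty, Finset.sum_empty] at hν1
      norm_num at hν1
    · obtain ⟨i0⟩ := hI
      haveI hOe : IsEmpty (Fin (N + 1) → Fin n → O) :=
        ⟨fun X => hO.false (X 0 ⟨0, hn⟩)⟩
      have h := hP1 (fun _ _ => i0)
      rw [Finset.univ_eq_empty, Finset.sum_empty] at h
      norm_num at h
  · set d : Fin n → O := fun _ => Classical.choice hO with hd
    set K : ℝ := (Fintype.card O : ℝ) with hK
    have hK1 : (1 : ℝ) ≤ K := by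
      rw [hK]
      exact_mod_cast Fintype.card_pos (α := O)
    set KL : Fin N × (Fin (N + 1) → Fin n → I) → ℝ :=
      fun a => ∑ Y, SV5.pushf (P a.2) (SV5.trunc d (a.1 : ℕ)) Y
        * SV5.klcond (P a.2) d a.1 Y with hKL
    have hKL0 : ∀ a, 0 ≤ KL a := fun a =>
      Finset.sum_nonneg fun Y _ => mul_nonneg
        (SV5.pushf_nonneg (hP0 a.2) _ _) (SV5.klcond_nonneg d (hP0 a.2) a.1 Y)
    -- Step 1: apply Pinsker to each term
    have step1 : ∑ a : Fin N × (Fin (N + 1) → Fin n → I), ν a *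
          ∑ X : Fin (N + 1) → Fin n → O, P a.2 X *
            ∑ x1 : Fin n → O, ∑ x2 : Fin n → O,
              |tildeJoint P a.1 a.2 (fun k => X k.succ) x1 x2
                - tildeFst P a.1 a.2 (fun k => X k.succ) x1
                  * tildeSnd P a.1 a.2 (fun k => X k.succ) x2|
        ≤ ∑ a : Fin N × (Fin (N + 1) → Fin n → I), ν a * Real.sqrt (2 * KL a) := by
      refine Finset.sum_le_sum fun a _ => ?_
      exact mul_le_mul_of_nonneg_left (SV5.stepA P hP0 hP1 d a.1 a.2) (hν0 a)
    -- Step 2: Cauchy-Schwarz over `a`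
    have step2 : ∑ a : Fin N × (Fin (N + 1) → Fin n → I), ν a * Real.sqrt (2 * KL a)
        ≤ Real.sqrt (2 * ∑ a : Fin N × (Fin (N + 1) → Fin n → I), ν a * KL a) := by
      have hsq : (∑ a, ν a * Real.sqrt (2 * KL a)) ^ 2
          ≤ (∑ a, ν a) * (∑ a, ν a * (2 * KL a)) := by
        apply Finset.sum_sq_le_sum_mul_sum_of_sq_eq_mul
        · exact fun a _ => hν0 a
        · intro a _
          have := hKL0 a
          have := hν0 a
          positivity
        · intro a _
          rw [mul_pow, Real.sq_sqrt (by have := hKL0 a; positivity)]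
          ring
      rw [hν1, one_mul] at hsq
      have he : ∑ a, ν a * (2 * KL a) = 2 * ∑ a, ν a * KL a := by
        rw [Finset.mul_sum]
        exact Finset.sum_congr rfl fun a _ => by ring
      rw [he] at hsq
      have hnn : 0 ≤ ∑ a, ν a * Real.sqrt (2 * KL a) :=
        Finset.sum_nonneg fun a _ => mul_nonneg (hν0 a) (Real.sqrt_nonneg _)
      have hy : 0 ≤ 2 * ∑ a, ν a * KL a := by
        have : 0 ≤ ∑ a, ν a * KL a :=
          Finset.sum_nonneg fun a _ => mul_nonneg (hν0 a) (hKL0 a)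
        linarith
      exact (Real.le_sqrt hnn hy).2 hsq
    -- Step 3: the chain rule bound
    have step3 : ∑ a : Fin N × (Fin (N + 1) → Fin n → I), ν a * KL a
        ≤ (1 / 2 + ε) ^ m * ((n : ℝ) * Real.log K) := by
      have hlogK : 0 ≤ Real.log K := Real.log_nonneg hK1
      have hchain : ∀ U : Fin (N + 1) → Fin n → I,
          (∑ j : Fin N, ∑ Y, SV5.pushf (P U) (SV5.trunc d (j : ℕ)) Y
              * SV5.klcond (P U) d j Y)
            ≤ (n : ℝ) * Real.log K :=
        fun U => SV5.chain_bound d (hP0 U) (hP1 U)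
      have hchain' : ∀ U : Fin (N + 1) → Fin n → I,
          ∑ j : Fin N, KL (j, U) ≤ (n : ℝ) * Real.log K := by
        intro U
        have he : ∑ j : Fin N, KL (j, U)
            = ∑ j : Fin N, ∑ Y, SV5.pushf (P U) (SV5.trunc d (j : ℕ)) Y
                * SV5.klcond (P U) d j Y :=
          Finset.sum_congr rfl fun j _ => by rw [hKL]
        rw [he]
        exact hchain U
      calc ∑ a : Fin N × (Fin (N + 1) → Fin n → I), ν a * KL a
          = ∑ U : Fin (N + 1) → Fin n → I, ∑ j : Fin N, ν (j, U) * KL (j, U) :=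
            Fintype.sum_prod_type_right _
        _ ≤ ∑ U : Fin (N + 1) → Fin n → I, ∑ j : Fin N,
              ((1 / 2 + ε) ^ m * ∑ j' : Fin N, ν (j', U)) * KL (j, U) := by
            refine Finset.sum_le_sum fun U _ => Finset.sum_le_sum fun j _ => ?_
            exact mul_le_mul_of_nonneg_right (hνSV j U) (hKL0 (j, U))
        _ = ∑ U : Fin (N + 1) → Fin n → I,
              ((1 / 2 + ε) ^ m * ∑ j' : Fin N, ν (j', U)) * ∑ j : Fin N, KL (j, U) := by
            refine Finset.sum_congr rfl fun U _ => ?_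
            exact (Finset.mul_sum _ _ _).symm
        _ ≤ ∑ U : Fin (N + 1) → Fin n → I,
              ((1 / 2 + ε) ^ m * ∑ j' : Fin N, ν (j', U)) * ((n : ℝ) * Real.log K) := by
            refine Finset.sum_le_sum fun U _ => ?_
            refine mul_le_mul_of_nonneg_left (hchain' U) ?_
            have h1 : (0 : ℝ) ≤ (1 / 2 + ε) ^ m := by positivity
            have h2 : 0 ≤ ∑ j' : Fin N, ν (j', U) :=
              Finset.sum_nonneg fun j' _ => hν0 (j', U)
            positivity
        _ = (1 / 2 + ε) ^ m * ((n : ℝ) * Real.log K) := by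
            rw [← Finset.sum_mul]
            have : ∑ U : Fin (N + 1) → Fin n → I,
                ((1 / 2 + ε) ^ m * ∑ j' : Fin N, ν (j', U))
                = (1 / 2 + ε) ^ m := by
              rw [← Finset.mul_sum]
              have h := Fintype.sum_prod_type_right (f := ν)
              rw [← h, hν1, mul_one]
            rw [this]
    -- Step 4: numerics
    have hNpos : (0 : ℝ) < (N : ℝ) := by
      rw [hN]
      positivity
    have hNcast : (N : ℝ) = (2 : ℝ) ^ m := by
      rw [hN]
      push_cast
      ring
    have h2ε : (0 : ℝ) < 1 + 2 * ε := by linarith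
    have hrpow : (N : ℝ) ^ Real.logb 2 (1 + 2 * ε) = (1 + 2 * ε) ^ m := by
      rw [hNcast, ← Real.rpow_natCast (2 : ℝ) m, ← Real.rpow_mul (by norm_num),
        mul_comm, Real.rpow_mul (by norm_num),
        Real.rpow_logb (by norm_num) (by norm_num) h2ε, Real.rpow_natCast]
    have hlog2 : Real.log 2 ≠ 0 := ne_of_gt (Real.log_pos one_lt_two)
    have harg : 2 * Real.log 2 * ((N : ℝ) ^ Real.logb 2 (1 + 2 * ε))
          * ((n : ℝ) * Real.logb 2 (Fintype.card O)) / (N : ℝ)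
        = 2 * ((1 / 2 + ε) ^ m * ((n : ℝ) * Real.log K)) := by
      rw [hrpow, hNcast, Real.logb, ← hK]
      have hhalf : ((1 : ℝ) / 2 + ε) ^ m = (1 + 2 * ε) ^ m / 2 ^ m := by
        rw [show (1 : ℝ) / 2 + ε = (1 + 2 * ε) / 2 by ring, div_pow]
      rw [hhalf]
      field_simp
    calc ∑ a : Fin N × (Fin (N + 1) → Fin n → I), ν a *
          ∑ X : Fin (N + 1) → Fin n → O, P a.2 X *
            ∑ x1 : Fin n → O, ∑ x2 : Fin n → O,
              |tildeJoint P a.1 a.2 (fun k => X k.succ) x1 x2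
                - tildeFst P a.1 a.2 (fun k => X k.succ) x1
                  * tildeSnd P a.1 a.2 (fun k => X k.succ) x2|
        ≤ Real.sqrt (2 * ∑ a : Fin N × (Fin (N + 1) → Fin n → I), ν a * KL a) :=
          le_trans step1 step2
      _ ≤ Real.sqrt (2 * ((1 / 2 + ε) ^ m * ((n : ℝ) * Real.log K))) := by
          apply Real.sqrt_le_sqrt
          linarith [step3]
      _ = Real.sqrt (2 * Real.log 2 * ((N : ℝ) ^ Real.logb 2 (1 + 2 * ε))
            * ((n : ℝ) * Real.logb 2 (Fintype.card O)) / (N : ℝ)) := by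
          rw [harg]

end
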